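/- Let α be a real number with α ∉ ℤ, and let X be any of the spaces c₀(Δ^(α)), c(Δ^(α)), ℓ∞(Δ^(α)) equipped with the norm ‖x‖ = sup_n |(Δ^(α)x)_n|. Then X is a complete normed linear space (a Banach space) and each coordinate functional x ↦ x_n is a continuous linear functional on X; that is, X is a BK space. -/
import Mathlib


open Filter Finset Topology

/-- The fractional difference matrix `Δ^(α)`. -/
noncomputable def fracDelta (α : ℝ) (n k : ℕ) : ℝ :=
  if k ≤ n then
    (-1 : ℝ) ^ (n - k) * Real.Gamma (α + 1) /
      ((Nat.factorial (n - k) : ℝ) * Real.Gamma (α - n + k + 1))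
  else 0

/-- `(Δ^(α)x)_n = ∑_{k=0}^n Δ^(α)_{nk} x_k`. -/
noncomputable def fracDeltaSeq (α : ℝ) (x : ℕ → ℝ) (n : ℕ) : ℝ :=
  ∑ k ∈ Finset.range (n + 1), fracDelta α n k * x k

/-- Membership in `c₀(Δ^(α))`. -/
def memC0Delta (α : ℝ) (x : ℕ → ℝ) : Prop :=
  Tendsto (fracDeltaSeq α x) atTop (nhds 0)

/-- Membership in `c(Δ^(α))`. -/
def memCDelta (α : ℝ) (x : ℕ → ℝ) : Prop :=
  ∃ L : ℝ, Tendsto (fracDeltaSeq α x) atTop (nhds L)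

/-- Membership in `ℓ∞(Δ^(α))`. -/
def memLinfDelta (α : ℝ) (x : ℕ → ℝ) : Prop :=
  ∃ C : ℝ, ∀ n, |fracDeltaSeq α x n| ≤ C

/-- The norm `‖x‖ = sup_n |(Δ^(α)x)_n|`. -/
noncomputable def deltaNorm (α : ℝ) (x : ℕ → ℝ) : ℝ :=
  ⨆ n, |fracDeltaSeq α x n|

lemma gamma_ne (α : ℝ) (hα : ∀ m : ℤ, α ≠ (m : ℝ)) : Real.Gamma (α + 1) ≠ 0 := by
  apply Real.Gamma_ne_zero
  intro m hm
  exact hα (-(m : ℤ) - 1) (by push_cast; linarith)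

lemma fracDelta_diag (α : ℝ) (hα : ∀ m : ℤ, α ≠ (m : ℝ)) (n : ℕ) : fracDelta α n n = 1 := by
  have h : (α - (n : ℝ) + (n : ℝ) + 1) = α + 1 := by ring
  simp [fracDelta, h, div_self (gamma_ne α hα)]

lemma fds_apply_succ (α : ℝ) (hα : ∀ m : ℤ, α ≠ (m : ℝ)) (x : ℕ → ℝ) (n : ℕ) :
    fracDeltaSeq α x n = x n + ∑ k ∈ Finset.range n, fracDelta α n k * x k := by
  rw [fracDeltaSeq, Finset.sum_range_succ, fracDelta_diag α hα, one_mul, add_comm]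

lemma fds_add_apply (α : ℝ) (x y : ℕ → ℝ) (n : ℕ) :
    fracDeltaSeq α (x + y) n = fracDeltaSeq α x n + fracDeltaSeq α y n := by
  simp [fracDeltaSeq, mul_add, Finset.sum_add_distrib]

lemma fds_smul_apply (α : ℝ) (c : ℝ) (x : ℕ → ℝ) (n : ℕ) :
    fracDeltaSeq α (c • x) n = c * fracDeltaSeq α x n := by
  simp only [fracDeltaSeq, Pi.smul_apply, smul_eq_mul, Finset.mul_sum]
  exact Finset.sum_congr rfl fun k _ => by ring

lemma fds_sub_apply (α : ℝ) (x y : ℕ → ℝ) (n : ℕ) :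
    fracDeltaSeq α (x - y) n = fracDeltaSeq α x n - fracDeltaSeq α y n := by
  simp [fracDeltaSeq, mul_sub, Finset.sum_sub_distrib]

lemma fds_zero_apply (α : ℝ) (n : ℕ) : fracDeltaSeq α (0 : ℕ → ℝ) n = 0 := by
  simp [fracDeltaSeq]

noncomputable def invSeq (α : ℝ) (y : ℕ → ℝ) : ℕ → ℝ
  | n => y n - ∑ k ∈ (Finset.range n).attach,
      fracDelta α n k.1 * invSeq α y k.1
  decreasing_by exact Finset.mem_range.mp k.2

lemma invSeq_eq (α : ℝ) (y : ℕ → ℝ) (n : ℕ) :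
    invSeq α y n = y n - ∑ k ∈ Finset.range n, fracDelta α n k * invSeq α y k := by
  rw [invSeq]
  rw [Finset.sum_attach (Finset.range n) (fun k => fracDelta α n k * invSeq α y k)]

lemma fds_invSeq (α : ℝ) (hα : ∀ m : ℤ, α ≠ (m : ℝ)) (y : ℕ → ℝ) (n : ℕ) :
    fracDeltaSeq α (invSeq α y) n = y n := by
  rw [fds_apply_succ α hα, invSeq_eq]; ring

noncomputable def coordC (α : ℝ) : ℕ → ℝ
  | n => 1 + ∑ k ∈ (Finset.range n).attach, |fracDelta α n k.1| * coordC α k.1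
  decreasing_by exact Finset.mem_range.mp k.2

lemma coordC_eq (α : ℝ) (n : ℕ) :
    coordC α n = 1 + ∑ k ∈ Finset.range n, |fracDelta α n k| * coordC α k := by
  rw [coordC]
  rw [Finset.sum_attach (Finset.range n) (fun k => |fracDelta α n k| * coordC α k)]

lemma coordC_nonneg (α : ℝ) (n : ℕ) : 0 ≤ coordC α n := by
  induction n using Nat.strong_induction_on with
  | _ n ih =>
    rw [coordC_eq]
    have h : 0 ≤ ∑ k ∈ Finset.range n, |fracDelta α n k| * coordC α k :=
      Finset.sum_nonneg fun k hk =>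
        mul_nonneg (abs_nonneg _) (ih k (Finset.mem_range.mp hk))
    linarith

lemma coord_bound (α : ℝ) (hα : ∀ m : ℤ, α ≠ (m : ℝ)) (z : ℕ → ℝ) (M : ℝ)
    (h : ∀ k, |fracDeltaSeq α z k| ≤ M) (n : ℕ) :
    |z n| ≤ coordC α n * M := by
  induction n using Nat.strong_induction_on with
  | _ n ih =>
    have h1 : z n = fracDeltaSeq α z n - ∑ k ∈ Finset.range n, fracDelta α n k * z k := by
      rw [fds_apply_succ α hα]; ring
    have h2 : |z n| ≤ M + ∑ k ∈ Finset.range n, |fracDelta α n k| * (coordC α k * M) := by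
      rw [h1]
      calc |fracDeltaSeq α z n - ∑ k ∈ Finset.range n, fracDelta α n k * z k|
          ≤ |fracDeltaSeq α z n| + |∑ k ∈ Finset.range n, fracDelta α n k * z k| :=
            abs_sub _ _
        _ ≤ M + ∑ k ∈ Finset.range n, |fracDelta α n k| * (coordC α k * M) := by
            refine add_le_add (h n) ?_
            refine (Finset.abs_sum_le_sum_abs _ _).trans ?_
            refine Finset.sum_le_sum fun k hk => ?_
            rw [abs_mul]
            exact mul_le_mul_of_nonneg_left (ih k (Finset.mem_range.mp hk)) (abs_nonneg _)
    have h3 : ∑ k ∈ Finset.range n, |fracDelta α n k| * (coordC α k * M)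
        = (∑ k ∈ Finset.range n, |fracDelta α n k| * coordC α k) * M := by
      rw [Finset.sum_mul]; exact Finset.sum_congr rfl fun _ _ => by ring
    rw [coordC_eq, add_mul, one_mul]
    rw [h3] at h2
    exact h2

/-- Each of `c₀(Δ^(α))`, `c(Δ^(α))`, `ℓ∞(Δ^(α))`, with the norm
`‖x‖ = sup_n |(Δ^(α)x)_n|`, is a complete normed linear (BK) space on which all
coordinate functionals are continuous. -/
theorem fracDelta_spaces_BK (α : ℝ) (hα : ∀ m : ℤ, α ≠ (m : ℝ))
    (X : Set (ℕ → ℝ))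
    (hX : X = {x | memC0Delta α x} ∨ X = {x | memCDelta α x} ∨ X = {x | memLinfDelta α x}) :
    -- `X` is a linear subspace of the space of all sequences
    ((0 : ℕ → ℝ) ∈ X) ∧
    (∀ x y : ℕ → ℝ, x ∈ X → y ∈ X → x + y ∈ X) ∧
    (∀ (c : ℝ) (x : ℕ → ℝ), x ∈ X → c • x ∈ X) ∧
    -- `deltaNorm` is a norm on `X`
    (∀ x ∈ X, 0 ≤ deltaNorm α x) ∧
    (∀ x ∈ X, (deltaNorm α x = 0 ↔ x = 0)) ∧
    (∀ x ∈ X, ∀ y ∈ X, deltaNorm α (x + y) ≤ deltaNorm α x + deltaNorm α y) ∧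
    (∀ (c : ℝ), ∀ x ∈ X, deltaNorm α (c • x) = |c| * deltaNorm α x) ∧
    -- `X` is complete with respect to this norm
    (∀ u : ℕ → (ℕ → ℝ), (∀ i, u i ∈ X) →
      (∀ ε : ℝ, 0 < ε → ∃ N : ℕ, ∀ i j : ℕ, N ≤ i → N ≤ j → deltaNorm α (u i - u j) < ε) →
      ∃ x ∈ X, Tendsto (fun i => deltaNorm α (u i - x)) atTop (nhds 0)) ∧
    -- every coordinate functional `x ↦ x n` is continuous (bounded) on `X`
    (∀ n : ℕ, ∃ C : ℝ, ∀ x ∈ X, ∀ y ∈ X, |x n - y n| ≤ C * deltaNorm α (x - y)) := by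
  classical
  -- every member has bounded transform
  have hbdd : ∀ x ∈ X, ∃ M : ℝ, ∀ n, |fracDeltaSeq α x n| ≤ M := by
    rcases hX with h | h | h <;> subst h <;> intro x hx
    · obtain ⟨M, hM⟩ := (Filter.Tendsto.abs (hx : Tendsto (fracDeltaSeq α x) atTop (𝓝 0))).bddAbove_range
      exact ⟨M, fun n => hM ⟨n, rfl⟩⟩
    · obtain ⟨L, hL⟩ := hx
      obtain ⟨M, hM⟩ := hL.abs.bddAbove_range
      exact ⟨M, fun n => hM ⟨n, rfl⟩⟩
    · exact hx
  have hBA : ∀ x ∈ X, BddAbove (Set.range fun n => |fracDeltaSeq α x n|) := by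
    intro x hx
    obtain ⟨M, hM⟩ := hbdd x hx
    exact ⟨M, by rintro r ⟨n, rfl⟩; exact hM n⟩
  have hBA2 : ∀ x ∈ X, ∀ y ∈ X,
      BddAbove (Set.range fun n => |fracDeltaSeq α (x - y) n|) := by
    intro x hx y hy
    obtain ⟨M1, hM1⟩ := hbdd x hx
    obtain ⟨M2, hM2⟩ := hbdd y hy
    refine ⟨M1 + M2, ?_⟩
    rintro r ⟨n, rfl⟩
    show |fracDeltaSeq α (x - y) n| ≤ M1 + M2
    rw [fds_sub_apply]
    exact (abs_sub _ _).trans (add_le_add (hM1 n) (hM2 n))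
  have hle_norm : ∀ x ∈ X, ∀ y ∈ X, ∀ n,
      |fracDeltaSeq α x n - fracDeltaSeq α y n| ≤ deltaNorm α (x - y) := by
    intro x hx y hy n
    have h := le_ciSup (hBA2 x hx y hy) n
    rw [fds_sub_apply] at h
    exact h
  have hnn2 : ∀ x ∈ X, ∀ y ∈ X, 0 ≤ deltaNorm α (x - y) := by
    intro x hx y hy
    exact le_trans (abs_nonneg _) (le_ciSup (hBA2 x hx y hy) 0)
  -- zero membership
  have hzero : (0 : ℕ → ℝ) ∈ X := by
    rcases hX with h | h | h <;> subst h
    · show Tendsto (fracDeltaSeq α (0 : ℕ → ℝ)) atTop (𝓝 0)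
      have : fracDeltaSeq α (0 : ℕ → ℝ) = fun _ => 0 := funext (fds_zero_apply α)
      rw [this]; exact tendsto_const_nhds
    · refine ⟨0, ?_⟩
      have : fracDeltaSeq α (0 : ℕ → ℝ) = fun _ => 0 := funext (fds_zero_apply α)
      rw [this]; exact tendsto_const_nhds
    · exact ⟨0, fun n => by rw [fds_zero_apply]; simp⟩
  -- additive closure
  have hadd : ∀ x y : ℕ → ℝ, x ∈ X → y ∈ X → x + y ∈ X := by
    rcases hX with h | h | h <;> subst h <;> intro x y hx hy
    · show Tendsto (fracDeltaSeq α (x + y)) atTop (𝓝 0)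
      have he : fracDeltaSeq α (x + y)
          = fun n => fracDeltaSeq α x n + fracDeltaSeq α y n := funext (fds_add_apply α x y)
      rw [he]
      have hx' : Tendsto (fracDeltaSeq α x) atTop (𝓝 0) := hx
      have hy' : Tendsto (fracDeltaSeq α y) atTop (𝓝 0) := hy
      simpa using hx'.add hy'
    · obtain ⟨L1, h1⟩ := hx
      obtain ⟨L2, h2⟩ := hy
      refine ⟨L1 + L2, ?_⟩
      have he : fracDeltaSeq α (x + y)
          = fun n => fracDeltaSeq α x n + fracDeltaSeq α y n := funext (fds_add_apply α x y)
      rw [he]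
      exact h1.add h2
    · obtain ⟨C1, h1⟩ := hx
      obtain ⟨C2, h2⟩ := hy
      refine ⟨C1 + C2, fun n => ?_⟩
      rw [fds_add_apply]
      exact (abs_add_le _ _).trans (add_le_add (h1 n) (h2 n))
  -- scalar closure
  have hsmul : ∀ (c : ℝ) (x : ℕ → ℝ), x ∈ X → c • x ∈ X := by
    rcases hX with h | h | h <;> subst h <;> intro c x hx
    · show Tendsto (fracDeltaSeq α (c • x)) atTop (𝓝 0)
      have he : fracDeltaSeq α (c • x)
          = fun n => c * fracDeltaSeq α x n := funext (fds_smul_apply α c x)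
      rw [he]
      have hx' : Tendsto (fracDeltaSeq α x) atTop (𝓝 0) := hx
      simpa using hx'.const_mul c
    · obtain ⟨L, hL⟩ := hx
      refine ⟨c * L, ?_⟩
      have he : fracDeltaSeq α (c • x)
          = fun n => c * fracDeltaSeq α x n := funext (fds_smul_apply α c x)
      rw [he]
      exact hL.const_mul c
    · obtain ⟨C, hC⟩ := hx
      refine ⟨|c| * C, fun n => ?_⟩
      rw [fds_smul_apply, abs_mul]
      exact mul_le_mul_of_nonneg_left (hC n) (abs_nonneg c)
  refine ⟨hzero, hadd, hsmul, ?_, ?_, ?_, ?_, ?_, ?_⟩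
  · -- nonnegativity
    intro x hx
    exact le_trans (abs_nonneg _) (le_ciSup (hBA x hx) 0)
  · -- norm zero iff zero
    intro x hx
    constructor
    · intro h0
      have hz : ∀ k, |fracDeltaSeq α x k| ≤ 0 := fun k =>
        (le_ciSup (hBA x hx) k).trans (le_of_eq h0)
      funext n
      have h1 := coord_bound α hα x 0 hz n
      rw [mul_zero] at h1
      exact abs_nonpos_iff.mp h1
    · rintro rfl
      simp only [deltaNorm, fds_zero_apply, abs_zero, ciSup_const]
  · -- triangle inequality
    intro x hx y hy
    refine ciSup_le fun n => ?_
    rw [fds_add_apply]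
    exact (abs_add_le _ _).trans
      (add_le_add (le_ciSup (hBA x hx) n) (le_ciSup (hBA y hy) n))
  · -- homogeneity
    intro c x hx
    have he : ∀ n, |fracDeltaSeq α (c • x) n| = |c| * |fracDeltaSeq α x n| := fun n => by
      rw [fds_smul_apply, abs_mul]
    calc deltaNorm α (c • x) = ⨆ n, |c| * |fracDeltaSeq α x n| := iSup_congr he
      _ = |c| * ⨆ n, |fracDeltaSeq α x n| :=
          (Real.mul_iSup_of_nonneg (abs_nonneg c) _).symm
  · -- completeness
    intro u hu hc
    set f : ℕ → ℕ → ℝ := fun i => fracDeltaSeq α (u i) with hf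
    have hptw : ∀ ε : ℝ, 0 < ε → ∃ N, ∀ i j, N ≤ i → N ≤ j → ∀ n, |f i n - f j n| < ε := by
      intro ε hε
      obtain ⟨N, hN⟩ := hc ε hε
      exact ⟨N, fun i j hi hj n =>
        lt_of_le_of_lt (hle_norm (u i) (hu i) (u j) (hu j) n) (hN i j hi hj)⟩
    have hcau : ∀ n, CauchySeq fun i => f i n := by
      intro n
      rw [Metric.cauchySeq_iff]
      intro ε hε
      obtain ⟨N, hN⟩ := hptw ε hε
      exact ⟨N, fun i hi j hj => by rw [Real.dist_eq]; exact hN i j hi hj n⟩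
    choose y hy using fun n => cauchySeq_tendsto_of_complete (hcau n)
    have hunif : ∀ ε : ℝ, 0 < ε → ∃ N, ∀ i, N ≤ i → ∀ n, |f i n - y n| ≤ ε := by
      intro ε hε
      obtain ⟨N, hN⟩ := hptw ε hε
      refine ⟨N, fun i hi n => ?_⟩
      have h1 : Tendsto (fun j => |f i n - f j n|) atTop (𝓝 |f i n - y n|) :=
        (tendsto_const_nhds.sub (hy n)).abs
      exact le_of_tendsto h1 (Filter.eventually_atTop.2 ⟨N, fun j hj => (hN i j hi hj n).le⟩)
    have hfx : ∀ n, fracDeltaSeq α (invSeq α y) n = y n := fds_invSeq α hα y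
    have hfe : fracDeltaSeq α (invSeq α y) = y := funext hfx
    refine ⟨invSeq α y, ?_, ?_⟩
    · -- membership of the limit
      rcases hX with h | h | h <;> subst h
      · -- c₀
        show Tendsto (fracDeltaSeq α (invSeq α y)) atTop (𝓝 0)
        rw [hfe, Metric.tendsto_atTop]
        intro ε hε
        obtain ⟨N, hN⟩ := hunif (ε / 2) (by linarith)
        have hu0 : Tendsto (f N) atTop (𝓝 0) := hu N
        rw [Metric.tendsto_atTop] at hu0
        obtain ⟨N2, hN2⟩ := hu0 (ε / 2) (by linarith)
        refine ⟨N2, fun n hn => ?_⟩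
        have h1 := hN N le_rfl n
        have h2 := hN2 n hn
        rw [Real.dist_eq, sub_zero] at h2 ⊢
        have h3 : |y n| ≤ |f N n - y n| + |f N n| := by
          have t : |(-(f N n - y n)) + f N n| ≤ |f N n - y n| + |f N n| :=
            (abs_add_le _ _).trans (add_le_add (abs_neg _).le le_rfl)
          have e : (-(f N n - y n)) + f N n = y n := by ring
          rw [e] at t
          exact t
        linarith
      · -- c
        show ∃ L, Tendsto (fracDeltaSeq α (invSeq α y)) atTop (𝓝 L)
        rw [hfe]
        have hycau : CauchySeq y := by
          rw [Metric.cauchySeq_iff]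
          intro ε hε
          obtain ⟨N, hN⟩ := hunif (ε / 4) (by linarith)
          obtain ⟨L, hL⟩ := hu N
          have hcf : CauchySeq (f N) := hL.cauchySeq
          rw [Metric.cauchySeq_iff] at hcf
          obtain ⟨N2, hN2⟩ := hcf (ε / 4) (by linarith)
          refine ⟨N2, fun n hn m hm => ?_⟩
          have h1 := hN N le_rfl n
          have h2 := hN N le_rfl m
          have h3 := hN2 n hn m hm
          rw [Real.dist_eq] at h3 ⊢
          have t : |(-(f N n - y n)) + (f N n - f N m) + (f N m - y m)|
              ≤ |f N n - y n| + |f N n - f N m| + |f N m - y m| := by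
            refine (abs_add_le _ _).trans (add_le_add ?_ le_rfl)
            exact (abs_add_le _ _).trans (add_le_add (abs_neg _).le le_rfl)
          have e : (-(f N n - y n)) + (f N n - f N m) + (f N m - y m) = y n - y m := by ring
          rw [e] at t
          linarith
        exact cauchySeq_tendsto_of_complete hycau
      · -- ℓ∞
        show ∃ C, ∀ n, |fracDeltaSeq α (invSeq α y) n| ≤ C
        rw [hfe]
        obtain ⟨N, hN⟩ := hunif 1 one_pos
        obtain ⟨M, hM⟩ := hu N
        refine ⟨M + 1, fun n => ?_⟩
        have h1 := hN N le_rfl n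
        have h2 := hM n
        have h3 : |y n| ≤ |f N n| + |f N n - y n| := by
          have t : |f N n - (f N n - y n)| ≤ |f N n| + |f N n - y n| := abs_sub _ _
          have e : f N n - (f N n - y n) = y n := by ring
          rw [e] at t
          exact t
        linarith
    · -- convergence in the norm
      rw [Metric.tendsto_atTop]
      intro ε hε
      obtain ⟨N, hN⟩ := hunif (ε / 2) (by linarith)
      refine ⟨N, fun i hi => ?_⟩
      have hterm : ∀ n, |fracDeltaSeq α (u i - invSeq α y) n| = |f i n - y n| := fun n => by
        rw [fds_sub_apply, hfx n]
      have hba : BddAbove (Set.range fun n => |fracDeltaSeq α (u i - invSeq α y) n|) := by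
        refine ⟨ε / 2, ?_⟩
        rintro r ⟨n, rfl⟩
        show |fracDeltaSeq α (u i - invSeq α y) n| ≤ ε / 2
        rw [hterm n]
        exact hN i hi n
      have hle : deltaNorm α (u i - invSeq α y) ≤ ε / 2 := by
        refine ciSup_le fun n => ?_
        rw [hterm n]
        exact hN i hi n
      have h0 : 0 ≤ deltaNorm α (u i - invSeq α y) :=
        le_trans (abs_nonneg _) (le_ciSup hba 0)
      rw [Real.dist_eq, sub_zero, abs_of_nonneg h0]
      linarith
  · -- coordinate functionals
    intro n
    refine ⟨coordC α n, fun x hx y hy => ?_⟩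
    have hb : ∀ k, |fracDeltaSeq α (x - y) k| ≤ deltaNorm α (x - y) := fun k =>
      le_ciSup (hBA2 x hx y hy) k
    have h1 := coord_bound α hα (x - y) _ hb n
    simpa using h1
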